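/- For every h ∈ C↑_sur(b^ω), the filterings refining the filtering of h are exactly the filterings of compositions with h: F_b((U^h_s)) = {(U^{f∘h}_s)_{s ∈ b^{<ω}} : f ∈ C↑_sur(b^ω)}, where a filtering (V_s) refines (U_s) if each V_s lies in the Boolean algebra generated by the U_s. -/

import Mathlib

noncomputable section
open Classical

/-- Lexicographic strict order on `ℕ → Fin b`. -/
def lexLT (b : ℕ) (x y : ℕ → Fin b) : Prop :=
  ∃ n, (∀ m, m < n → x m = y m) ∧ x n < y n

/-- Lexicographic order `≤_lex` on `ℕ → Fin b`. -/
def lexLE (b : ℕ) (x y : ℕ → Fin b) : Prop := x = y ∨ lexLT b x y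

def IsGreatestLex (b : ℕ) (S : Set (ℕ → Fin b)) (x : ℕ → Fin b) : Prop :=
  x ∈ S ∧ ∀ y ∈ S, lexLE b y x

def IsLeastLex (b : ℕ) (S : Set (ℕ → Fin b)) (x : ℕ → Fin b) : Prop :=
  x ∈ S ∧ ∀ y ∈ S, lexLE b x y

/-- `S` is an interval for the lexicographic order. -/
def LexInterval (b : ℕ) (S : Set (ℕ → Fin b)) : Prop :=
  ∀ x ∈ S, ∀ y ∈ S, ∀ z, lexLE b x z → lexLE b z y → z ∈ S

/-- The basic clopen set of sequences extending the finite sequence `s`. -/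
def W (b : ℕ) (s : List (Fin b)) : Set (ℕ → Fin b) :=
  {x | ∀ i, (hi : i < s.length) → x i = s.get ⟨i, hi⟩}

/-- Continuous nondecreasing surjections of `b^ω`, i.e. members of `C↑_sur(b^ω)`. -/
def CSur (b : ℕ) (f : (ℕ → Fin b) → (ℕ → Fin b)) : Prop :=
  Continuous f ∧ Function.Surjective f ∧ ∀ x y, lexLE b x y → lexLE b (f x) (f y)

/-- A filtering on `b^ω`. -/
def Filtering (b : ℕ) (U : List (Fin b) → Set (ℕ → Fin b)) : Prop :=
  (∀ s, (U s).Nonempty ∧ IsClopen (U s) ∧ LexInterval b (U s)) ∧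
  U [] = Set.univ ∧
  (∀ s, U s = ⋃ i : Fin b, U (s ++ [i])) ∧
  (∀ s, ∀ i j : Fin b, i ≠ j → Disjoint (U (s ++ [i])) (U (s ++ [j]))) ∧
  (∀ s, ∀ i j : Fin b, i < j → ∀ x y,
    IsGreatestLex b (U (s ++ [i])) x → IsGreatestLex b (U (s ++ [j])) y → lexLT b x y)

/-- `A_b`: sequences eventually equal to `b-1` (the top of `Fin b`), except the constant
top sequence (the lexicographic maximum of `b^ω`). -/
def AbSet (b : ℕ) : Set (ℕ → Fin b) :=
  {x | (∃ N, ∀ n, N ≤ n → ∀ j : Fin b, j ≤ x n) ∧ ¬ ∀ n, ∀ j : Fin b, j ≤ x n}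

/-- `Y` is order isomorphic to `ℚ` with respect to the lexicographic order. -/
def OrderIsoQ (b : ℕ) (Y : Set (ℕ → Fin b)) : Prop :=
  ∃ e : ℚ ≃ Y, ∀ p q : ℚ, p ≤ q ↔ lexLE b (e p).1 (e q).1

/-- `Y_f = {max f⁻¹(W_s) : s ∈ b^{<ω}} \ {max b^ω}`. -/
def Yset (b : ℕ) (f : (ℕ → Fin b) → (ℕ → Fin b)) : Set (ℕ → Fin b) :=
  {x | (∃ s : List (Fin b), IsGreatestLex b (f ⁻¹' W b s) x) ∧ ¬ ∀ n, ∀ j : Fin b, j ≤ x n}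

/-- The metric `ρ_b` on `b^ω`. -/
def rhoB (b : ℕ) (x y : ℕ → Fin b) : ℝ :=
  if h : x = y then 0 else (2 : ℝ) ^ (-(Nat.find (Function.ne_iff.mp h) : ℤ))

/-- The sup-metric `ρ_∞` on `C↑_sur(b^ω)`. -/
def rhoInf (b : ℕ) (f g : (ℕ → Fin b) → (ℕ → Fin b)) : ℝ :=
  ⨆ x, rhoB b (f x) (g x)

/-- `⌊log₂(1/ε)⌋ + 1`. -/
def kOf (ε : ℝ) : ℕ := ⌊Real.logb 2 (1 / ε)⌋₊ + 1

/-- The `l`-th odd tangent number `t_l = tan^{(2l-1)}(0)`. -/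
def oddTangent (l : ℕ) : ℝ := iteratedDeriv (2 * l - 1) Real.tan 0

/-- The lexicographically increasing enumeration of `b^k`: `sEnum b k hb i` is the
`i`-th element of `b^k` in lexicographic order (base-`b` digits, most significant first). -/
def sEnum (b k : ℕ) (hb : 0 < b) (i : ℕ) : List (Fin b) :=
  List.ofFn fun j : Fin k => (⟨i / b ^ (k - 1 - (j : ℕ)) % b, Nat.mod_lt _ hb⟩ : Fin b)

end

/-- Membership in the Boolean algebra of sets generated by a family `A`. -/
inductive InAlgebra {α : Type*} (A : Set (Set α)) : Set α → Prop
  | base : ∀ S ∈ A, InAlgebra A S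
  | empty : InAlgebra A ∅
  | compl : ∀ S, InAlgebra A S → InAlgebra A Sᶜ
  | union : ∀ S T, InAlgebra A S → InAlgebra A T → InAlgebra A (S ∪ T)

section AuxProof
open Set Topology

variable {b : ℕ}

/-! ### Lexicographic order facts -/

theorem lexLT_iff_toLex {x y : ℕ → Fin b} : lexLT b x y ↔ toLex x < toLex y := Iff.rfl

theorem lexLE_iff_toLex {x y : ℕ → Fin b} : lexLE b x y ↔ toLex x ≤ toLex y := by
  rw [lexLE, le_iff_lt_or_eq]
  show x = y ∨ lexLT b x y ↔ lexLT b x y ∨ toLex x = toLex y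
  constructor
  · rintro (h | h)
    · exact Or.inr (congrArg toLex h)
    · exact Or.inl h
  · rintro (h | h)
    · exact Or.inr h
    · exact Or.inl (toLex.injective h)

theorem lexLE_refl (x : ℕ → Fin b) : lexLE b x x := Or.inl rfl

theorem lexLE_trans {x y z : ℕ → Fin b} (h1 : lexLE b x y) (h2 : lexLE b y z) :
    lexLE b x z := by
  rw [lexLE_iff_toLex] at *; exact le_trans h1 h2

theorem lexLE_antisymm {x y : ℕ → Fin b} (h1 : lexLE b x y) (h2 : lexLE b y x) : x = y := by
  rw [lexLE_iff_toLex] at *; exact toLex.injective (le_antisymm h1 h2)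

theorem lexLE_total (x y : ℕ → Fin b) : lexLE b x y ∨ lexLE b y x := by
  rw [lexLE_iff_toLex, lexLE_iff_toLex]; exact le_total _ _

theorem lexLT_of_lexLE_ne {x y : ℕ → Fin b} (h1 : lexLE b x y) (h2 : x ≠ y) : lexLT b x y := by
  rcases h1 with h | h
  · exact absurd h h2
  · exact h

theorem lexLT_of_not_lexLE {x y : ℕ → Fin b} (h : ¬ lexLE b x y) : lexLT b y x := by
  rw [lexLE_iff_toLex] at h; rw [lexLT_iff_toLex]; exact lt_of_not_ge h

theorem lexLE_of_lexLT {x y : ℕ → Fin b} (h : lexLT b x y) : lexLE b x y := Or.inr h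

theorem not_lexLT_of_lexLE {x y : ℕ → Fin b} (h : lexLE b x y) : ¬ lexLT b y x := by
  rw [lexLE_iff_toLex] at h; rw [lexLT_iff_toLex]; exact not_lt_of_ge h

theorem isGreatestLex_unique {S : Set (ℕ → Fin b)} {m m' : ℕ → Fin b}
    (h1 : IsGreatestLex b S m) (h2 : IsGreatestLex b S m') : m = m' :=
  lexLE_antisymm (h2.2 m h1.1) (h1.2 m' h2.1)

/-! ### Facts about the cylinders `W` -/

theorem mem_W_iff {s : List (Fin b)} {x : ℕ → Fin b} :
    x ∈ W b s ↔ ∀ i, (hi : i < s.length) → x i = s.get ⟨i, hi⟩ := Iff.rfl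

theorem W_nil : W b ([] : List (Fin b)) = Set.univ := by
  ext x; simp [mem_W_iff]

theorem mem_W_append_singleton {s : List (Fin b)} {i : Fin b} {x : ℕ → Fin b} :
    x ∈ W b (s ++ [i]) ↔ x ∈ W b s ∧ x s.length = i := by
  constructor
  · intro hx
    refine ⟨fun k hk => ?_, ?_⟩
    · have h1 := hx k (by simp; omega)
      simp only [List.get_eq_getElem] at h1 ⊢
      rwa [List.getElem_append_left hk] at h1
    · have h1 := hx s.length (by simp)
      simp only [List.get_eq_getElem] at h1
      rwa [List.getElem_concat_length rfl] at h1
  · rintro ⟨h1, h2⟩ k hk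
    simp only [List.length_append, List.length_singleton] at hk
    simp only [List.get_eq_getElem]
    rcases Nat.lt_or_ge k s.length with hk' | hk'
    · rw [List.getElem_append_left hk']
      have := h1 k hk'
      simpa using this
    · have hkk : k = s.length := by omega
      subst hkk
      rwa [List.getElem_concat_length rfl]

theorem W_eq_iUnion (hb : 0 < b) (s : List (Fin b)) :
    W b s = ⋃ i : Fin b, W b (s ++ [i]) := by
  ext x
  simp only [Set.mem_iUnion, mem_W_append_singleton]
  constructor
  · intro hx; exact ⟨x s.length, hx, rfl⟩
  · rintro ⟨i, hx, -⟩; exact hx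

theorem W_disjoint {s : List (Fin b)} {i j : Fin b} (hij : i ≠ j) :
    Disjoint (W b (s ++ [i])) (W b (s ++ [j])) := by
  rw [Set.disjoint_left]
  intro x hx1 hx2
  rw [mem_W_append_singleton] at hx1 hx2
  exact hij (hx1.2 ▸ hx2.2 ▸ rfl)

theorem W_clopen (s : List (Fin b)) : IsClopen (W b s) := by
  have : W b s = ⋂ i : Fin s.length, (fun x : ℕ → Fin b => x i) ⁻¹' {s.get i} := by
    ext x
    simp only [Set.mem_iInter, Set.mem_preimage, Set.mem_singleton_iff, mem_W_iff]
    exact ⟨fun hx i => hx i i.2, fun hx i hi => hx ⟨i, hi⟩⟩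
  rw [this]
  exact isClopen_iInter_of_finite fun i =>
    (isClopen_discrete {s.get i}).preimage (continuous_apply (i : ℕ))

theorem W_nonempty (hb : 0 < b) (s : List (Fin b)) : (W b s).Nonempty := by
  refine ⟨fun n => if hn : n < s.length then s.get ⟨n, hn⟩ else ⟨0, hb⟩, ?_⟩
  intro i hi
  simp [hi]

theorem W_interval (s : List (Fin b)) : LexInterval b (W b s) := by
  intro x hx y hy z hxz hzy i
  induction i using Nat.strong_induction_on with
  | _ i ih =>
    intro hi
    have hle1 : s.get ⟨i, hi⟩ ≤ z i := by
      rcases hxz with h | ⟨k, hagree, hlt⟩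
      · rw [← h]; exact le_of_eq (hx i hi).symm
      · rcases Nat.lt_trichotomy k i with hki | hki | hki
        · have h1 : x k = z k := (hx k (by omega)).trans (ih k hki (by omega)).symm
          exact absurd h1 (ne_of_lt hlt)
        · subst hki
          have := hlt; rw [hx k hi] at this; exact this.le
        · have h1 : x i = z i := hagree i hki
          rw [← h1, hx i hi]
    have hle2 : z i ≤ s.get ⟨i, hi⟩ := by
      rcases hzy with h | ⟨k, hagree, hlt⟩
      · rw [h]; exact le_of_eq (hy i hi)
      · rcases Nat.lt_trichotomy k i with hki | hki | hki
        · have h1 : z k = y k := (ih k hki (by omega)).trans (hy k (by omega)).symm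
          exact absurd h1 (ne_of_lt hlt)
        · subst hki
          have := hlt; rw [hy k hi] at this; exact this.le
        · have h1 : z i = y i := hagree i hki
          rw [h1, hy i hi]
    exact le_antisymm hle2 hle1

/-! ### `W` as a topological basis -/

theorem W_eq_cylinder (s : List (Fin b)) (x : ℕ → Fin b) (hx : x ∈ W b s) :
    W b s = PiNat.cylinder x s.length := by
  ext y
  rw [PiNat.mem_cylinder_iff, mem_W_iff]
  constructor
  · intro hy i hi; rw [hy i hi, hx i hi]
  · intro hy i hi; rw [hy i hi]; exact hx i hi

theorem isTopologicalBasis_W (hb : 0 < b) :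
    TopologicalSpace.IsTopologicalBasis {S : Set (ℕ → Fin b) | ∃ s, S = W b s} := by
  have heq : {S : Set (ℕ → Fin b) | ∃ s, S = W b s} =
      {S | ∃ (x : ℕ → Fin b) (n : ℕ), S = PiNat.cylinder x n} := by
    ext S
    constructor
    · rintro ⟨s, rfl⟩
      obtain ⟨x, hx⟩ := W_nonempty hb s
      exact ⟨x, s.length, W_eq_cylinder s x hx⟩
    · rintro ⟨x, n, rfl⟩
      refine ⟨List.ofFn (fun i : Fin n => x i), ?_⟩
      have hx : x ∈ W b (List.ofFn fun i : Fin n => x i) := by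
        intro i hi
        simp [List.get_ofFn]
      rw [W_eq_cylinder _ x hx]
      simp
  rw [heq]
  exact PiNat.isTopologicalBasis_cylinders _

/-! ### Existence of lexicographic maxima of closed sets -/

theorem exists_isGreatestLex (hb : 0 < b) {S : Set (ℕ → Fin b)} (hcl : IsClosed S)
    (hne : S.Nonempty) : ∃ m, IsGreatestLex b S m := by
  classical
  let T : ℕ → Set (ℕ → Fin b) :=
    fun n => Nat.rec S (fun n Tn => {x ∈ Tn | ∀ y ∈ Tn, y n ≤ x n}) n
  have hTsucc : ∀ n, T (n + 1) = {x ∈ T n | ∀ y ∈ T n, y n ≤ x n} := fun n => rfl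
  have hTmono : ∀ n, T (n + 1) ⊆ T n := fun n x hx => hx.1
  have hTsub : ∀ n, T n ⊆ S := by
    intro n; induction n with
    | zero => exact subset_rfl
    | succ n ih => exact (hTmono n).trans ih
  have hTle : ∀ a c : ℕ, a ≤ c → T c ⊆ T a := by
    intro a c hac
    induction hac with
    | refl => exact subset_rfl
    | step _ ih => exact (hTmono _).trans ih
  have hTne : ∀ n, (T n).Nonempty := by
    intro n; induction n with
    | zero => exact hne
    | succ n ih =>
      have hfin : ((fun x : ℕ → Fin b => x n) '' T n).Finite :=
        Set.finite_univ.subset (Set.subset_univ _)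
      obtain ⟨v, ⟨x₀, hx₀, hv⟩, hmax⟩ :=
        Set.Finite.exists_maximalFor id ((fun x => x n) '' T n) hfin (ih.image _)
      refine ⟨x₀, hx₀, fun y hy => ?_⟩
      rcases le_or_gt (y n) (x₀ n) with hle | hlt
      · exact hle
      · have hvy : id v ≤ id (y n) := by
          simp only [id]; rw [← hv]; exact hlt.le
        have h2 := hmax ⟨y, hy, rfl⟩ hvy
        simp only [id] at h2
        exact h2.trans hv.ge
  have hagree : ∀ n, ∀ x ∈ T (n + 1), ∀ y ∈ T (n + 1), x n = y n := by
    intro n x hx y hy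
    exact le_antisymm (hy.2 x hx.1) (hx.2 y hy.1)
  choose c hc using hTne
  set m : ℕ → Fin b := fun n => c (n + 1) n with hm
  have hTagree_m : ∀ n k, k < n → ∀ x ∈ T n, x k = m k := by
    intro n k hk x hx
    exact hagree k x (hTle (k + 1) n hk hx) (c (k + 1)) (hc (k + 1))
  have hmS : m ∈ S := by
    by_contra hmS'
    obtain ⟨v, ⟨s, rfl⟩, hmv, hsub⟩ :=
      (isTopologicalBasis_W hb).exists_subset_of_mem_open (show m ∈ Sᶜ from hmS')
        hcl.isOpen_compl
    have hcs : c s.length ∈ W b s := by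
      intro i hi
      rw [hTagree_m s.length i hi (c s.length) (hc s.length)]
      exact hmv i hi
    exact (hsub hcs) (hTsub _ (hc s.length))
  refine ⟨m, hmS, fun y hy => ?_⟩
  by_contra hle
  obtain ⟨n, hag, hlt⟩ := lexLT_of_not_lexLE hle
  have hyT : ∀ k, k ≤ n → y ∈ T k := by
    intro k hk
    induction k with
    | zero => exact hy
    | succ k ih =>
      have hky : y ∈ T k := ih (by omega)
      refine ⟨hky, fun z hz => ?_⟩
      have h1 : y k = m k := (hag k (by omega)).symm
      have h2 : z k ≤ c (k + 1) k := (hc (k + 1)).2 z hz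
      rw [h1]; exact h2
  have hfin : y n ≤ m n := (hc (n + 1)).2 y (hyT n le_rfl)
  exact absurd hfin (not_le_of_gt hlt)

/-! ### Algebra lemmas -/

theorem inAlgebra_W_of_isClopen (hb : 0 < b) {C : Set (ℕ → Fin b)} (hC : IsClopen C) :
    InAlgebra {S | ∃ t : List (Fin b), S = W b t} C := by
  classical
  obtain ⟨Bs, hBs, hCeq⟩ := (isTopologicalBasis_W hb).open_eq_sUnion hC.isOpen
  have hcomp : IsCompact C := hC.isClosed.isCompact
  have hopen : ∀ s : ↥Bs, IsOpen (s : Set (ℕ → Fin b)) := by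
    rintro ⟨s, hs⟩
    obtain ⟨t, rfl⟩ := hBs hs
    exact (W_clopen t).isOpen
  have hcov : C ⊆ ⋃ s : ↥Bs, (s : Set (ℕ → Fin b)) := by
    rw [hCeq]
    intro x hx
    obtain ⟨u, hu, hxu⟩ := hx
    exact Set.mem_iUnion.2 ⟨⟨u, hu⟩, hxu⟩
  obtain ⟨t, ht⟩ := hcomp.elim_finite_subcover _ hopen hcov
  have hCeq2 : C = ⋃ s ∈ t, (s : Set (ℕ → Fin b)) := by
    refine subset_antisymm ht ?_
    intro x hx
    obtain ⟨u, hu, hxu⟩ := Set.mem_iUnion₂.1 hx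
    rw [hCeq]
    exact ⟨u, u.2, hxu⟩
  rw [hCeq2]
  clear hCeq2 ht hcov hcomp hCeq hC
  induction t using Finset.induction_on with
  | empty => simpa using InAlgebra.empty
  | @insert a u ha ih =>
    rw [Finset.set_biUnion_insert]
    exact InAlgebra.union _ _ (InAlgebra.base _ (hBs a.2)) ih

theorem isClopen_of_inAlgebra_W {C : Set (ℕ → Fin b)}
    (h : InAlgebra {S | ∃ t : List (Fin b), S = W b t} C) : IsClopen C := by
  induction h with
  | base S hS => obtain ⟨t, rfl⟩ := hS; exact W_clopen t
  | empty => exact isClopen_empty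
  | compl S _ ih => exact ih.compl
  | union S T _ _ ih1 ih2 => exact ih1.union ih2

theorem inAlgebra_preimage (g : (ℕ → Fin b) → (ℕ → Fin b)) {C : Set (ℕ → Fin b)}
    (h : InAlgebra {S | ∃ t : List (Fin b), S = W b t} C) :
    InAlgebra {S | ∃ t : List (Fin b), S = g ⁻¹' W b t} (g ⁻¹' C) := by
  induction h with
  | base S hS => obtain ⟨t, rfl⟩ := hS; exact InAlgebra.base _ ⟨t, rfl⟩
  | empty => simpa using (InAlgebra.empty :
      InAlgebra {S | ∃ t : List (Fin b), S = g ⁻¹' W b t} ∅)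
  | compl S _ ih => rw [Set.preimage_compl]; exact InAlgebra.compl _ ih
  | union S T _ _ ih1 ih2 => rw [Set.preimage_union]; exact InAlgebra.union _ _ ih1 ih2

theorem inAlgebra_pullback (g : (ℕ → Fin b) → (ℕ → Fin b)) {V : Set (ℕ → Fin b)}
    (h : InAlgebra {S | ∃ t : List (Fin b), S = g ⁻¹' W b t} V) :
    ∃ C, InAlgebra {S | ∃ t : List (Fin b), S = W b t} C ∧ V = g ⁻¹' C := by
  induction h with
  | base S hS => obtain ⟨t, rfl⟩ := hS; exact ⟨W b t, InAlgebra.base _ ⟨t, rfl⟩, rfl⟩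
  | empty => exact ⟨∅, InAlgebra.empty, by simp⟩
  | compl S _ ih =>
    obtain ⟨C, hC, rfl⟩ := ih
    exact ⟨Cᶜ, InAlgebra.compl _ hC, by simp⟩
  | union S T _ _ ih1 ih2 =>
    obtain ⟨C1, h1, rfl⟩ := ih1
    obtain ⟨C2, h2, rfl⟩ := ih2
    exact ⟨C1 ∪ C2, InAlgebra.union _ _ h1 h2, by simp⟩

/-! ### Filterings from continuous monotone surjections -/

theorem CSur.comp {f g : (ℕ → Fin b) → (ℕ → Fin b)} (hf : CSur b f) (hg : CSur b g) :
    CSur b (f ∘ g) :=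
  ⟨hf.1.comp hg.1, hf.2.1.comp hg.2.1, fun x y hxy => hf.2.2 _ _ (hg.2.2 x y hxy)⟩

theorem lexInterval_preimage {g : (ℕ → Fin b) → (ℕ → Fin b)}
    (hg : ∀ x y, lexLE b x y → lexLE b (g x) (g y)) {S : Set (ℕ → Fin b)}
    (hS : LexInterval b S) : LexInterval b (g ⁻¹' S) := by
  intro x hx y hy z hxz hzy
  exact hS (g x) hx (g y) hy (g z) (hg x z hxz) (hg z y hzy)

theorem filtering_preimage (hb : 0 < b) {g : (ℕ → Fin b) → (ℕ → Fin b)} (hg : CSur b g) :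
    Filtering b (fun s => g ⁻¹' W b s) := by
  obtain ⟨hgc, hgs, hgm⟩ := hg
  refine ⟨fun s => ⟨?_, ?_, ?_⟩, ?_, ?_, ?_, ?_⟩
  · obtain ⟨w, hw⟩ := W_nonempty hb s
    obtain ⟨x, hx⟩ := hgs w
    exact ⟨x, show g x ∈ W b s from hx.symm ▸ hw⟩
  · exact (W_clopen s).preimage hgc
  · exact lexInterval_preimage hgm (W_interval s)
  · show g ⁻¹' W b [] = Set.univ
    rw [W_nil, Set.preimage_univ]
  · intro s
    show g ⁻¹' W b s = ⋃ i : Fin b, g ⁻¹' W b (s ++ [i])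
    rw [W_eq_iUnion hb s, Set.preimage_iUnion]
  · intro s i j hij
    exact (W_disjoint hij).preimage g
  · intro s i j hij x y hx hy
    have h1 : g x ∈ W b (s ++ [i]) := hx.1
    have h2 : g y ∈ W b (s ++ [j]) := hy.1
    rw [mem_W_append_singleton] at h1 h2
    have hlt : lexLT b (g x) (g y) := by
      refine ⟨s.length, fun m hm => ?_, ?_⟩
      · rw [h1.1 m hm, h2.1 m hm]
      · rw [h1.2, h2.2]; exact hij
    refine lexLT_of_not_lexLE fun hyx => ?_
    exact not_lexLT_of_lexLE (hgm y x hyx) hlt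

/-! ### Construction of a map from a filtering -/

open Classical in
noncomputable def sigC (hb : 0 < b) (C : List (Fin b) → Set (ℕ → Fin b)) (x : ℕ → Fin b) :
    ℕ → List (Fin b)
  | 0 => []
  | n + 1 =>
    sigC hb C x n ++
      [if h : ∃ i : Fin b, x ∈ C (sigC hb C x n ++ [i]) then h.choose else ⟨0, hb⟩]

open Classical in
noncomputable def fC (hb : 0 < b) (C : List (Fin b) → Set (ℕ → Fin b)) (x : ℕ → Fin b) (n : ℕ) : Fin b :=
  if h : ∃ i : Fin b, x ∈ C (sigC hb C x n ++ [i]) then h.choose else ⟨0, hb⟩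

theorem sigC_succ (hb : 0 < b) (C : List (Fin b) → Set (ℕ → Fin b)) (x : ℕ → Fin b) (n : ℕ) :
    sigC hb C x (n + 1) = sigC hb C x n ++ [fC hb C x n] := rfl

theorem sigC_length (hb : 0 < b) (C : List (Fin b) → Set (ℕ → Fin b)) (x : ℕ → Fin b) :
    ∀ n, (sigC hb C x n).length = n := by
  intro n
  induction n with
  | zero => rfl
  | succ n ih => rw [sigC_succ]; simp [ih]

theorem sigC_mem (hb : 0 < b) {C : List (Fin b) → Set (ℕ → Fin b)} (hC : Filtering b C)
    (x : ℕ → Fin b) : ∀ n, x ∈ C (sigC hb C x n) := by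
  intro n
  induction n with
  | zero =>
    show x ∈ C []
    rw [hC.2.1]; trivial
  | succ n ih =>
    have hx : x ∈ ⋃ i : Fin b, C (sigC hb C x n ++ [i]) := by
      rw [← hC.2.2.1]; exact ih
    obtain ⟨i, hi⟩ := Set.mem_iUnion.1 hx
    have hex : ∃ i : Fin b, x ∈ C (sigC hb C x n ++ [i]) := ⟨i, hi⟩
    rw [sigC_succ]
    show x ∈ C (sigC hb C x n ++ [fC hb C x n])
    rw [fC, dif_pos hex]
    exact hex.choose_spec

theorem fC_mem (hb : 0 < b) {C : List (Fin b) → Set (ℕ → Fin b)} (hC : Filtering b C)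
    (x : ℕ → Fin b) (n : ℕ) : x ∈ C (sigC hb C x n ++ [fC hb C x n]) := by
  have := sigC_mem hb hC x (n + 1)
  rwa [sigC_succ] at this

theorem sigC_get (hb : 0 < b) (C : List (Fin b) → Set (ℕ → Fin b)) (x : ℕ → Fin b) :
    ∀ {n k : ℕ}, k < n → ∀ (h : k < (sigC hb C x n).length),
      (sigC hb C x n).get ⟨k, h⟩ = fC hb C x k := by
  intro n
  induction n with
  | zero => intro k hk; omega
  | succ n ih =>
    intro k hk h
    simp only [List.get_eq_getElem] at *
    rw [List.getElem_of_eq (sigC_succ hb C x n)]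
    have h' : k < (sigC hb C x n ++ [fC hb C x n]).length := by
      rw [← sigC_succ]; exact h
    rcases Nat.lt_or_ge k n with hkn | hkn
    · rw [List.getElem_append_left (by rw [sigC_length]; exact hkn)]
      have := ih hkn (by rw [sigC_length]; exact hkn)
      simpa using this
    · have hkeq : k = n := by omega
      subst hkeq
      rw [List.getElem_concat_length (sigC_length hb C x _).symm]

theorem sigC_eq_iff (hb : 0 < b) (C : List (Fin b) → Set (ℕ → Fin b)) (x : ℕ → Fin b)
    (s : List (Fin b)) :
    sigC hb C x s.length = s ↔ ∀ k (hk : k < s.length), fC hb C x k = s.get ⟨k, hk⟩ := by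
  constructor
  · intro hs k hk
    have h2 : k < (sigC hb C x s.length).length := by rw [sigC_length]; exact hk
    rw [← sigC_get hb C x hk h2]
    exact List.get_of_eq hs ⟨k, h2⟩
  · intro hk
    refine List.ext_get (by rw [sigC_length]) fun k h1 h2 => ?_
    rw [sigC_get hb C x (by rw [sigC_length] at h1; exact h1) h1]
    exact hk k h2

theorem mem_C_iff (hb : 0 < b) {C : List (Fin b) → Set (ℕ → Fin b)} (hC : Filtering b C)
    (s : List (Fin b)) (x : ℕ → Fin b) : x ∈ C s ↔ sigC hb C x s.length = s := by
  constructor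
  · intro hx
    induction s using List.reverseRecOn with
    | nil => rfl
    | append_singleton t i ih =>
      have hxt : x ∈ C t := by
        rw [hC.2.2.1 t]
        exact Set.mem_iUnion.2 ⟨i, hx⟩
      have ht := ih hxt
      have hfi : fC hb C x t.length = i := by
        by_contra hne
        have h1 : x ∈ C (t ++ [fC hb C x t.length]) := by
          have := fC_mem hb hC x t.length
          rwa [ht] at this
        exact Set.disjoint_left.1 (hC.2.2.2.1 t _ i hne) h1 hx
      simp only [List.length_append, List.length_singleton]
      rw [sigC_succ, ht, hfi]
  · intro hs
    have := sigC_mem hb hC x s.length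
    rwa [hs] at this

theorem fC_preimage_W (hb : 0 < b) {C : List (Fin b) → Set (ℕ → Fin b)} (hC : Filtering b C)
    (s : List (Fin b)) : (fun x => fC hb C x) ⁻¹' W b s = C s := by
  ext x
  rw [Set.mem_preimage, mem_W_iff, mem_C_iff hb hC]
  exact (sigC_eq_iff hb C x s).symm

theorem fC_continuous (hb : 0 < b) {C : List (Fin b) → Set (ℕ → Fin b)} (hC : Filtering b C) :
    Continuous (fun x => fC hb C x) := by
  rw [(isTopologicalBasis_W hb).continuous_iff]
  rintro S ⟨s, rfl⟩
  rw [fC_preimage_W hb hC]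
  exact ((hC.1 s).2.1).isOpen

theorem fC_surjective (hb : 0 < b) {C : List (Fin b) → Set (ℕ → Fin b)} (hC : Filtering b C) :
    Function.Surjective (fun x => fC hb C x) := by
  intro y
  set s : ℕ → List (Fin b) := fun n => List.ofFn fun k : Fin n => y k with hs
  have hlen : ∀ n, (s n).length = n := by simp [hs]
  have hsucc : ∀ n, s (n + 1) = s n ++ [y n] := by
    intro n
    show List.ofFn (fun k : Fin (n + 1) => y k) = List.ofFn (fun k : Fin n => y k) ++ [y n]
    rw [List.ofFn_succ', List.concat_eq_append]
    congr 1
  have hantitone : ∀ n, C (s (n + 1)) ⊆ C (s n) := by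
    intro n
    rw [hsucc n, hC.2.2.1 (s n)]
    intro x hx
    exact Set.mem_iUnion.2 ⟨y n, hx⟩
  have hne : ∀ n, (C (s n)).Nonempty := fun n => (hC.1 _).1
  have hclosed : ∀ n, IsClosed (C (s n)) := fun n => (hC.1 _).2.1.isClosed
  obtain ⟨x, hx⟩ := IsCompact.nonempty_iInter_of_sequence_nonempty_isCompact_isClosed
    (fun n => C (s n)) hantitone hne ((hclosed 0).isCompact) hclosed
  refine ⟨x, ?_⟩
  funext n
  have hx1 : x ∈ C (s (n + 1)) := Set.mem_iInter.1 hx (n + 1)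
  have hx0 : x ∈ C (s n) := Set.mem_iInter.1 hx n
  have h1 := (mem_C_iff hb hC _ x).1 hx1
  have h0 := (mem_C_iff hb hC _ x).1 hx0
  rw [hlen] at h1 h0
  rw [sigC_succ, hsucc n, h0] at h1
  have := List.append_cancel_left h1
  simpa using this

theorem fC_mono (hb : 0 < b) {C : List (Fin b) → Set (ℕ → Fin b)} (hC : Filtering b C) :
    ∀ x y, lexLE b x y → lexLE b (fC hb C x) (fC hb C y) := by
  intro x y hxy
  by_contra hcon
  obtain ⟨n, hag, hlt⟩ := lexLT_of_not_lexLE hcon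
  have hsig : sigC hb C y n = sigC hb C x n := by
    refine List.ext_get (by rw [sigC_length, sigC_length]) fun k h1 h2 => ?_
    rw [sigC_get hb C y (by rw [sigC_length] at h1; exact h1) h1,
      sigC_get hb C x (by rw [sigC_length] at h2; exact h2) h2]
    exact hag k (by rw [sigC_length] at h1; exact h1)
  set s := sigC hb C x n with hsdef
  set i := fC hb C x n with hidef
  set j := fC hb C y n with hjdef
  have hxmem : x ∈ C (s ++ [i]) := fC_mem hb hC x n
  have hymem : y ∈ C (s ++ [j]) := by
    have := fC_mem hb hC y n
    rwa [hsig] at this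
  obtain ⟨mj, hmj⟩ := exists_isGreatestLex hb ((hC.1 (s ++ [j])).2.1.isClosed) (hC.1 _).1
  obtain ⟨mi, hmi⟩ := exists_isGreatestLex hb ((hC.1 (s ++ [i])).2.1.isClosed) (hC.1 _).1
  have hml : lexLT b mj mi := hC.2.2.2.2 s j i hlt mj mi hmj hmi
  have hylei : lexLE b y mi := lexLE_trans (hmj.2 y hymem) (lexLE_of_lexLT hml)
  have hyC : y ∈ C (s ++ [i]) := (hC.1 (s ++ [i])).2.2 x hxmem mi hmi.1 y hxy hylei
  exact Set.disjoint_left.1 (hC.2.2.2.1 s i j (ne_of_gt hlt)) hyC hymem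

end AuxProof

/-- for `h ∈ C↑_sur(b^ω)`, the filterings refining the filtering of `h`
are exactly the filterings of the compositions `f ∘ h`, `f ∈ C↑_sur(b^ω)`. -/
theorem refining_filterings_eq_compositions (b : ℕ) (hb : 2 ≤ b)
    (h : (ℕ → Fin b) → (ℕ → Fin b)) (hh : CSur b h) :
    {V : List (Fin b) → Set (ℕ → Fin b) | Filtering b V ∧
        ∀ s, InAlgebra {S | ∃ t : List (Fin b), S = h ⁻¹' W b t} (V s)} =
      {V | ∃ f, CSur b f ∧ V = fun s => (f ∘ h) ⁻¹' W b s} := by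
  have hb0 : 0 < b := by omega
  ext V
  simp only [Set.mem_setOf_eq]
  constructor
  · rintro ⟨hV, halg⟩
    have hex : ∀ s, ∃ Cs, InAlgebra {S | ∃ t : List (Fin b), S = W b t} Cs ∧ V s = h ⁻¹' Cs :=
      fun s => inAlgebra_pullback h (halg s)
    choose C0 hC0alg hC0eq using hex
    have himg : ∀ s, h '' V s = C0 s := fun s => by
      rw [hC0eq]; exact Set.image_preimage_eq _ hh.2.1
    obtain ⟨hV1, hVnil, hVun, hVdis, hVmax⟩ := hV
    have hC0fil : Filtering b C0 := by
      refine ⟨fun s => ⟨?_, ?_, ?_⟩, ?_, ?_, ?_, ?_⟩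
      · rw [← himg]; exact ((hV1 s).1).image _
      · exact isClopen_of_inAlgebra_W (hC0alg s)
      · intro u hu v hv z huz hzv
        rw [← himg] at hu hv ⊢
        obtain ⟨xu, hxu, rfl⟩ := hu
        obtain ⟨xv, hxv, rfl⟩ := hv
        obtain ⟨w, rfl⟩ := hh.2.1 z
        rcases lexLE_total xu w with h1 | h1
        · rcases lexLE_total w xv with h2 | h2
          · exact ⟨w, (hV1 s).2.2 xu hxu xv hxv w h1 h2, rfl⟩
          · exact ⟨xv, hxv, (lexLE_antisymm hzv (hh.2.2 xv w h2)).symm⟩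
        · exact ⟨xu, hxu, lexLE_antisymm huz (hh.2.2 w xu h1)⟩
      · rw [← himg, hVnil, Set.image_univ]
        exact hh.2.1.range_eq
      · intro s
        rw [← himg, hVun s, Set.image_iUnion]
        exact Set.iUnion_congr fun i => himg _
      · intro s i j hij
        rw [Set.disjoint_left]
        intro z hz1 hz2
        rw [← himg] at hz2
        obtain ⟨a, ha, rfl⟩ := hz2
        have haV : a ∈ V (s ++ [i]) := by
          rw [hC0eq]; exact hz1
        exact Set.disjoint_left.1 (hVdis s i j hij) haV ha
      · intro s i j hij u v hu hv
        obtain ⟨mu, hmu⟩ :=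
          exists_isGreatestLex hb0 ((hV1 (s ++ [i])).2.1.isClosed) (hV1 _).1
        obtain ⟨mv, hmv⟩ :=
          exists_isGreatestLex hb0 ((hV1 (s ++ [j])).2.1.isClosed) (hV1 _).1
        have hmu' : IsGreatestLex b (C0 (s ++ [i])) (h mu) := by
          constructor
          · rw [← himg]; exact ⟨mu, hmu.1, rfl⟩
          · intro z hz
            rw [← himg] at hz
            obtain ⟨a, ha, rfl⟩ := hz
            exact hh.2.2 a mu (hmu.2 a ha)
        have hmv' : IsGreatestLex b (C0 (s ++ [j])) (h mv) := by
          constructor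
          · rw [← himg]; exact ⟨mv, hmv.1, rfl⟩
          · intro z hz
            rw [← himg] at hz
            obtain ⟨a, ha, rfl⟩ := hz
            exact hh.2.2 a mv (hmv.2 a ha)
        have h1 : u = h mu := isGreatestLex_unique hu hmu'
        have h2 : v = h mv := isGreatestLex_unique hv hmv'
        have hlt : lexLT b mu mv := hVmax s i j hij mu mv hmu hmv
        have hne : h mu ≠ h mv := by
          intro he
          have hmem : mu ∈ V (s ++ [j]) := by
            rw [hC0eq]
            exact (show h mu ∈ C0 (s ++ [j]) from he ▸ hmv'.1)
          exact Set.disjoint_left.1 (hVdis s i j (ne_of_lt hij)) hmu.1 hmem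
        rw [h1, h2]
        exact lexLT_of_lexLE_ne (hh.2.2 mu mv (lexLE_of_lexLT hlt)) hne
    refine ⟨fun x => fC hb0 C0 x,
      ⟨fC_continuous hb0 hC0fil, fC_surjective hb0 hC0fil, fC_mono hb0 hC0fil⟩, ?_⟩
    funext s
    rw [hC0eq s, Set.preimage_comp, fC_preimage_W hb0 hC0fil s]
  · rintro ⟨f, hf, rfl⟩
    refine ⟨filtering_preimage hb0 (hf.comp hh), ?_⟩
    intro s
    have h1 : InAlgebra {S | ∃ t : List (Fin b), S = W b t} (f ⁻¹' W b s) :=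
      inAlgebra_W_of_isClopen hb0 ((W_clopen s).preimage hf.1)
    have h2 := inAlgebra_preimage h h1
    show InAlgebra _ ((f ∘ h) ⁻¹' W b s)
    rw [Set.preimage_comp]
    exact h2
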